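/- Let A : ℝ≥0 → ℝ^{d×d} be continuous and Σ : ℝ≥0 → ℝ^{d×d} solve the matrix ODE ∂ₜΣ(t) = A(t)Σ(t) + Σ(t)A(t)ᵀ with Σ(0) symmetric positive definite. Then the centered Gaussian density ρ(t,x) = (2π)^{-d/2} det(Σ(t))^{-1/2} exp(-½ xᵀΣ(t)⁻¹x) satisfies the transport equation ∂ₜρ(t,x) + ∇ₓ·(A(t)x · ρ(t,x)) = 0. -/

import Mathlib

open MeasureTheory Matrix Real

/-- Spatial gradient of a scalar function. -/
noncomputable def grad {d : ℕ} (g : (Fin d → ℝ) → ℝ) (x : Fin d → ℝ) : Fin d → ℝ :=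
  fun i => fderiv ℝ g x (Pi.single i 1)

/-- Spatial divergence of a vector field. -/
noncomputable def vdiv {d : ℕ} (F : (Fin d → ℝ) → (Fin d → ℝ)) (x : Fin d → ℝ) : ℝ :=
  ∑ i, fderiv ℝ (fun y => F y i) x (Pi.single i 1)

/-- Spatial Jacobian matrix of a vector field: `(jac F x) i j = ∂ⱼ Fᵢ`. -/
noncomputable def jac {d : ℕ} (F : (Fin d → ℝ) → (Fin d → ℝ)) (x : Fin d → ℝ) :
    Matrix (Fin d) (Fin d) ℝ :=
  Matrix.of fun i j => fderiv ℝ (fun y => F y i) x (Pi.single j 1)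

/-- Spatial Hessian matrix of a scalar function. -/
noncomputable def hess {d : ℕ} (g : (Fin d → ℝ) → ℝ) (x : Fin d → ℝ) :
    Matrix (Fin d) (Fin d) ℝ :=
  Matrix.of fun i j => fderiv ℝ (fun y => grad g y i) x (Pi.single j 1)

/-- Spatial Laplacian of a scalar function. -/
noncomputable def lap {d : ℕ} (g : (Fin d → ℝ) → ℝ) (x : Fin d → ℝ) : ℝ :=
  ∑ i, hess g x i i

/-- Partial derivative in time of a time-dependent scalar function. -/
noncomputable def pt {d : ℕ} (g : ℝ → (Fin d → ℝ) → ℝ) (t : ℝ) (x : Fin d → ℝ) : ℝ :=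
  deriv (fun s => g s x) t

lemma jacobi_aux {d : ℕ} (M : ℝ → Matrix (Fin d) (Fin d) ℝ)
    (M' : Matrix (Fin d) (Fin d) ℝ) (t : ℝ)
    (h : ∀ i j, HasDerivAt (fun s => M s i j) (M' i j) t) :
    HasDerivAt (fun s => (M s).det) ((adjugate (M t) * M').trace) t := by
  have key : HasDerivAt (fun s => (M s).det)
      (∑ σ : Equiv.Perm (Fin d), (Equiv.Perm.sign σ : ℤ) *
        ∑ i, (∏ j ∈ Finset.univ.erase i, M t (σ j) j) * M' (σ i) i) t := by
    simp only [det_apply']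
    apply HasDerivAt.fun_sum
    intro σ _
    have hp : HasDerivAt (fun s => ∏ i, M s (σ i) i)
        (∑ i, (∏ j ∈ Finset.univ.erase i, M t (σ j) j) • M' (σ i) i) t :=
      HasDerivAt.fun_finsetProd (fun i _ => h (σ i) i)
    simpa [Finset.mul_sum, smul_eq_mul, mul_comm, mul_left_comm] using hp.const_mul
      ((Equiv.Perm.sign σ : ℤ) : ℝ)
  convert key using 1
  have hdet : ∀ i : Fin d, ((M t).updateCol i fun r => M' r i).det
      = ∑ σ : Equiv.Perm (Fin d), ((Equiv.Perm.sign σ : ℤ) : ℝ) *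
          ((∏ j ∈ Finset.univ.erase i, M t (σ j) j) * M' (σ i) i) := by
    intro i
    rw [det_apply']
    refine Finset.sum_congr rfl fun σ _ => ?_
    have hsplit : (∏ j, ((M t).updateCol i fun r => M' r i) (σ j) j)
        = M' (σ i) i * ∏ j ∈ Finset.univ.erase i, M t (σ j) j := by
      rw [← Finset.mul_prod_erase Finset.univ _ (Finset.mem_univ i)]
      congr 1
      · simp [updateCol_apply]
      · exact Finset.prod_congr rfl fun j hj => by
          simp [updateCol_apply, (Finset.mem_erase.mp hj).1]
    rw [hsplit]
    push_cast
    ring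
  calc ((M t).adjugate * M').trace
      = ∑ i, cramer (M t) (fun r => M' r i) i := by
        simp [cramer_eq_adjugate_mulVec, trace, diag, mul_apply, mulVec, dotProduct]
    _ = ∑ i, ∑ σ : Equiv.Perm (Fin d), ((Equiv.Perm.sign σ : ℤ) : ℝ) *
          ((∏ j ∈ Finset.univ.erase i, M t (σ j) j) * M' (σ i) i) := by
        simp only [cramer_apply, hdet]
    _ = _ := by rw [Finset.sum_comm]; simp [Finset.mul_sum]

lemma trace_adj_lyap {d : ℕ} (N A : Matrix (Fin d) (Fin d) ℝ) :
    (adjugate N * (A * N + N * Aᵀ)).trace = 2 * A.trace * N.det := by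
  rw [mul_add, trace_add, ← mul_assoc, trace_mul_cycle, mul_adjugate, ← mul_assoc,
    adjugate_mul, smul_mul, trace_smul, smul_mul, trace_smul]
  rw [one_mul, one_mul, trace_transpose]
  simp [smul_eq_mul]; ring

lemma hasDerivAt_matrix_inv {d : ℕ} (S : ℝ → Matrix (Fin d) (Fin d) ℝ)
    (S' : ℝ → Matrix (Fin d) (Fin d) ℝ) (t : ℝ)
    (h : ∀ s i j, HasDerivAt (fun τ => S τ i j) (S' s i j) s)
    (hd : (S t).det ≠ 0) :
    ∀ i j, HasDerivAt (fun s => (S s)⁻¹ i j)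
      ((-((S t)⁻¹ * S' t * (S t)⁻¹)) i j) t := by
  have hdet : ∀ s, HasDerivAt (fun τ => (S τ).det) ((adjugate (S s) * S' s).trace) s :=
    fun s => jacobi_aux S (S' s) s (h s)
  have hdetc : Continuous fun s => (S s).det :=
    continuous_iff_continuousAt.2 fun s => (hdet s).differentiableAt.continuousAt
  have hev : ∀ᶠ s in nhds t, (S s).det ≠ 0 := hdetc.continuousAt.eventually_ne hd
  have hadj : ∀ i j, DifferentiableAt ℝ (fun s => adjugate (S s) i j) t := by
    intro i j
    have : (fun s => adjugate (S s) i j)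
        = fun s => ((S s).updateRow j (Pi.single i 1)).det := by
      funext s; rw [adjugate_apply]
    rw [this]
    refine (jacobi_aux (fun s => (S s).updateRow j (Pi.single i 1))
      ((S' t).updateRow j 0) t fun k l => ?_).differentiableAt
    rcases eq_or_ne k j with rfl | hk
    · simpa [updateRow_apply] using hasDerivAt_const t ((Pi.single i 1 : Fin d → ℝ) l)
    · simpa [updateRow_apply, hk] using h t k l
  have hinvdiff : ∀ i j, DifferentiableAt ℝ (fun s => (S s)⁻¹ i j) t := by
    intro i j
    have : (fun s => (S s)⁻¹ i j) = fun s => ((S s).det)⁻¹ * adjugate (S s) i j := by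
      funext s; rw [inv_def, Ring.inverse_eq_inv']; rfl
    rw [this]
    exact ((hdet t).differentiableAt.inv hd).mul (hadj i j)
  set V : Matrix (Fin d) (Fin d) ℝ := of fun i j => deriv (fun s => (S s)⁻¹ i j) t with hVdef
  have hV : ∀ i j, HasDerivAt (fun s => (S s)⁻¹ i j) (V i j) t :=
    fun i j => (hinvdiff i j).hasDerivAt
  have hone : ∀ᶠ s in nhds t, S s * (S s)⁻¹ = 1 :=
    hev.mono fun s hs => mul_nonsing_inv _ (Ne.isUnit hs)
  have hzero : S' t * (S t)⁻¹ + S t * V = 0 := by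
    ext i j
    have h1 : HasDerivAt (fun s => (S s * (S s)⁻¹) i j)
        ((S' t * (S t)⁻¹ + S t * V) i j) t := by
      have : ∀ s, (S s * (S s)⁻¹) i j = ∑ k, S s i k * (S s)⁻¹ k j := fun s => rfl
      simp only [this, Matrix.add_apply, mul_apply]
      rw [← Finset.sum_add_distrib]
      exact HasDerivAt.fun_sum fun k _ => (h t i k).fun_mul (hV k j)
    have h2 : HasDerivAt (fun s => (S s * (S s)⁻¹) i j) 0 t := by
      refine (hasDerivAt_const t ((1 : Matrix (Fin d) (Fin d) ℝ) i j)).congr_of_eventuallyEq ?_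
      exact hone.mono fun s hs => by simp only [hs]
    have := h1.unique h2
    simpa using this
  have hVeq : V = -((S t)⁻¹ * S' t * (S t)⁻¹) := by
    have h3 : S t * V = -(S' t * (S t)⁻¹) := by
      rw [eq_neg_iff_add_eq_zero, add_comm]; exact hzero
    calc V = (S t)⁻¹ * (S t * V) := (nonsing_inv_mul_cancel_left _ _ (Ne.isUnit hd)).symm
      _ = -((S t)⁻¹ * S' t * (S t)⁻¹) := by rw [h3, mul_assoc]; simp [mul_assoc]
  intro i j
  rw [← hVeq]
  exact hV i j

lemma gaussian_component_fderiv {d : ℕ} (Minv Am : Matrix (Fin d) (Fin d) ℝ)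
    (hsym : Minvᵀ = Minv) (C : ℝ) (x : Fin d → ℝ) (i : Fin d) :
    fderiv ℝ (fun y => C * Real.exp (-(1 / 2 : ℝ) * (y ⬝ᵥ Minv.mulVec y)) * (Am.mulVec y) i) x
        (Pi.single i 1)
      = C * Real.exp (-(1 / 2 : ℝ) * (x ⬝ᵥ Minv.mulVec x))
          * (Am i i - (Minv.mulVec x) i * (Am.mulVec x) i) := by
  classical
  set pr : Fin d → ((Fin d → ℝ) →L[ℝ] ℝ) := fun p => ContinuousLinearMap.proj p with hpr
  set R : Fin d → ((Fin d → ℝ) →L[ℝ] ℝ) := fun p => ∑ q, Minv p q • pr q with hR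
  set RA : ((Fin d → ℝ) →L[ℝ] ℝ) := ∑ q, Am i q • pr q with hRA
  have hRapp : ∀ p v, R p v = (Minv.mulVec v) p := by
    intro p v
    simp [hR, hpr, ContinuousLinearMap.sum_apply, mulVec, dotProduct]
  have hRAapp : ∀ v, RA v = (Am.mulVec v) i := by
    intro v
    simp [hRA, hpr, ContinuousLinearMap.sum_apply, mulVec, dotProduct]
  have hRhas : ∀ p, HasFDerivAt (fun y => (Minv.mulVec y) p) (R p) x := by
    intro p
    have h1 : (fun y : Fin d → ℝ => (Minv.mulVec y) p) = ⇑(R p) := by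
      funext v; rw [hRapp]
    rw [h1]; exact (R p).hasFDerivAt
  have hRAhas : HasFDerivAt (fun y => (Am.mulVec y) i) RA x := by
    have h1 : (fun y : Fin d → ℝ => (Am.mulVec y) i) = ⇑RA := by
      funext v; rw [hRAapp]
    rw [h1]; exact RA.hasFDerivAt
  set L : ((Fin d → ℝ) →L[ℝ] ℝ) := ∑ p, (x p • R p + (Minv.mulVec x) p • pr p) with hL
  have hQ : HasFDerivAt (fun y => y ⬝ᵥ Minv.mulVec y) L x := by
    have h1 : (fun y : Fin d → ℝ => y ⬝ᵥ Minv.mulVec y)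
        = fun y => ∑ p, y p * (Minv.mulVec y) p := rfl
    rw [h1, hL]
    exact HasFDerivAt.fun_sum fun p _ => ((pr p).hasFDerivAt.fun_mul (hRhas p))
  have hg : HasFDerivAt (fun y => C * Real.exp (-(1 / 2 : ℝ) * (y ⬝ᵥ Minv.mulVec y)))
      (C • (Real.exp (-(1 / 2 : ℝ) * (x ⬝ᵥ Minv.mulVec x)) • ((-(1/2 : ℝ)) • L))) x :=
    ((hQ.const_mul (-(1/2:ℝ))).exp).const_mul C
  have hF := hg.fun_mul hRAhas
  rw [hF.fderiv]
  have hLe : L (Pi.single i 1) = 2 * (Minv.mulVec x) i := by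
    have hMsym : ∀ p, Minv p i = Minv i p := fun p => by
      conv_lhs => rw [← hsym, transpose_apply]
    simp only [hL, ContinuousLinearMap.sum_apply, ContinuousLinearMap.add_apply,
      ContinuousLinearMap.smul_apply, smul_eq_mul, hRapp, hpr,
      ContinuousLinearMap.proj_apply]
    rw [Finset.sum_add_distrib]
    have e1 : ∑ p, x p * (Minv.mulVec (Pi.single i 1)) p = (Minv.mulVec x) i := by
      simp only [mulVec, dotProduct, Pi.single_apply, mul_ite, mul_one, mul_zero,
        Finset.sum_ite_eq', Finset.mem_univ, if_true]
      exact Finset.sum_congr rfl fun p _ => by rw [hMsym p, mul_comm]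
    have e2 : ∑ p, (Minv.mulVec x) p * (Pi.single i 1 : Fin d → ℝ) p
        = (Minv.mulVec x) i := by
      simp [Pi.single_apply]
    rw [e1, e2]; ring
  have hRAe : RA (Pi.single i 1) = Am i i := by
    rw [hRAapp]
    simp [mulVec, dotProduct, Pi.single_apply]
  simp only [ContinuousLinearMap.add_apply, ContinuousLinearMap.smul_apply, smul_eq_mul,
    hLe, hRAe]
  ring

/-- if `Σ` solves the Lyapunov ODE `Σ' = AΣ + ΣAᵀ` with `Σ(0) ≻ 0`,
then the centered Gaussian density with covariance `Σ(t)` satisfies the transport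
equation with the linear vector field `f(t,x) = A(t)x`. -/
theorem gaussian_transport_equation {d : ℕ}
    (A S : ℝ → Matrix (Fin d) (Fin d) ℝ)
    (ρ : ℝ → (Fin d → ℝ) → ℝ)
    (hA : ∀ i j, Continuous fun t => A t i j)
    (hODE : ∀ t i j, HasDerivAt (fun τ => S τ i j) ((A t * S t + S t * (A t)ᵀ) i j) t)
    (hS0 : (S 0).PosDef)
    (hSpos : ∀ t, 0 ≤ t → (S t).PosDef)
    (hρ : ∀ t x, ρ t x = (2 * Real.pi) ^ (-(d : ℝ) / 2) * (S t).det ^ (-(1 : ℝ) / 2)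
        * Real.exp (-(1 / 2) * (x ⬝ᵥ (S t)⁻¹.mulVec x))) :
    ∀ t, 0 ≤ t → ∀ x, pt ρ t x + vdiv (fun y => ρ t y • (A t).mulVec y) x = 0 := by
  intro t ht x
  have hp := hSpos t ht
  have hdetpos : 0 < (S t).det := hp.det_pos
  have hd : (S t).det ≠ 0 := ne_of_gt hdetpos
  have hNsym : (S t)ᵀ = S t := by
    have h1 := hp.1
    rwa [Matrix.IsHermitian, conjTranspose_eq_transpose_of_trivial] at h1
  have hsyminv : ((S t)⁻¹)ᵀ = (S t)⁻¹ := by rw [transpose_nonsing_inv, hNsym]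
  -- abbreviation
  set K : ℝ := ((S t)⁻¹.mulVec x) ⬝ᵥ ((A t).mulVec x) with hK
  -- derivative of the inverse
  have hinv := hasDerivAt_matrix_inv S (fun s => A s * S s + S s * (A s)ᵀ) t
    (fun s i j => hODE s i j) hd
  -- the derivative matrix simplifies
  have hBsimp : -((S t)⁻¹ * (A t * S t + S t * (A t)ᵀ) * (S t)⁻¹)
      = -((S t)⁻¹ * A t + (A t)ᵀ * (S t)⁻¹) := by
    have e1 : (S t)⁻¹ * (A t * S t) * (S t)⁻¹ = (S t)⁻¹ * A t := by
      rw [Matrix.mul_assoc, Matrix.mul_assoc, mul_nonsing_inv _ (Ne.isUnit hd), Matrix.mul_one]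
    have e2 : (S t)⁻¹ * (S t * (A t)ᵀ) * (S t)⁻¹ = (A t)ᵀ * (S t)⁻¹ := by
      rw [← Matrix.mul_assoc, nonsing_inv_mul _ (Ne.isUnit hd), Matrix.one_mul]
    rw [Matrix.mul_add, Matrix.add_mul, e1, e2]
  -- quadratic form value of the derivative matrix
  have hBapp : x ⬝ᵥ (-((S t)⁻¹ * (A t * S t + S t * (A t)ᵀ) * (S t)⁻¹)).mulVec x
      = -(2 * K) := by
    rw [hBsimp, neg_mulVec, dotProduct_neg, add_mulVec]
    have t1 : x ⬝ᵥ ((S t)⁻¹ * A t).mulVec x = K := by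
      rw [← mulVec_mulVec, dotProduct_mulVec, ← hsyminv, vecMul_transpose, hK]
    have t2 : x ⬝ᵥ ((A t)ᵀ * (S t)⁻¹).mulVec x = K := by
      rw [← mulVec_mulVec, dotProduct_mulVec, vecMul_transpose, hK]
      exact dotProduct_comm _ _
    rw [dotProduct_add, t1, t2]; ring
  -- time derivative of the quadratic form
  have hQ : HasDerivAt (fun s => x ⬝ᵥ (S s)⁻¹.mulVec x) (-(2 * K)) t := by
    rw [← hBapp]
    have hexp : ∀ s, x ⬝ᵥ (S s)⁻¹.mulVec x = ∑ i, x i * ∑ j, (S s)⁻¹ i j * x j := fun s => rfl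
    have hexp' : x ⬝ᵥ (-((S t)⁻¹ * (A t * S t + S t * (A t)ᵀ) * (S t)⁻¹)).mulVec x
        = ∑ i, x i * ∑ j, (-((S t)⁻¹ * (A t * S t + S t * (A t)ᵀ) * (S t)⁻¹)) i j * x j := rfl
    simp only [hexp, hexp']
    exact HasDerivAt.fun_sum fun i _ => HasDerivAt.const_mul (x i)
      (HasDerivAt.fun_sum fun j _ => (hinv i j).mul_const (x j))
  -- time derivative of the determinant
  have hdetS : HasDerivAt (fun s => (S s).det) (2 * (A t).trace * (S t).det) t := by
    have h1 := jacobi_aux S (A t * S t + S t * (A t)ᵀ) t (hODE t)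
    rwa [trace_adj_lyap] at h1
  -- time derivative of det ^ (-1/2)
  have hD : HasDerivAt (fun s => (S s).det ^ (-(1 : ℝ) / 2))
      (-(A t).trace * (S t).det ^ (-(1 : ℝ) / 2)) t := by
    have h5 := hdetS.rpow_const (p := -(1 : ℝ) / 2) (Or.inl hd)
    convert h5 using 1
    have hx1 : (S t).det ^ (-(1 : ℝ) / 2) = (S t).det ^ (-(1 : ℝ) / 2 - 1) * (S t).det := by
      rw [← Real.rpow_add_one hd]; norm_num
    rw [hx1]; ring
  -- time derivative of the exponential factor
  have hE : HasDerivAt (fun s => Real.exp (-(1 / 2 : ℝ) * (x ⬝ᵥ (S s)⁻¹.mulVec x)))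
      (Real.exp (-(1 / 2 : ℝ) * (x ⬝ᵥ (S t)⁻¹.mulVec x)) * (-(1 / 2 : ℝ) * -(2 * K))) t :=
    (HasDerivAt.const_mul (-(1 / 2 : ℝ)) hQ).exp
  -- time derivative of ρ
  have hpt : pt ρ t x = ρ t x * (K - (A t).trace) := by
    have hρs : (fun s => ρ s x) = fun s => (2 * Real.pi) ^ (-(d : ℝ) / 2) *
        ((S s).det ^ (-(1 : ℝ) / 2) *
          Real.exp (-(1 / 2 : ℝ) * (x ⬝ᵥ (S s)⁻¹.mulVec x))) := by
      funext s; rw [hρ s x]; ring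
    have h6 : HasDerivAt (fun s => ρ s x)
        ((2 * Real.pi) ^ (-(d : ℝ) / 2) *
          (-(A t).trace * (S t).det ^ (-(1 : ℝ) / 2) *
              Real.exp (-(1 / 2 : ℝ) * (x ⬝ᵥ (S t)⁻¹.mulVec x)) +
            (S t).det ^ (-(1 : ℝ) / 2) *
              (Real.exp (-(1 / 2 : ℝ) * (x ⬝ᵥ (S t)⁻¹.mulVec x)) *
                (-(1 / 2 : ℝ) * -(2 * K))))) t := by
      rw [hρs]
      exact HasDerivAt.const_mul _ (hD.fun_mul hE)
    rw [pt, h6.deriv, hρ t x]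
    ring
  -- spatial divergence
  have hvdiv : vdiv (fun y => ρ t y • (A t).mulVec y) x = ρ t x * ((A t).trace - K) := by
    have hfun : ∀ i : Fin d, (fun y => (ρ t y • (A t).mulVec y) i)
        = fun y => ((2 * Real.pi) ^ (-(d : ℝ) / 2) * (S t).det ^ (-(1 : ℝ) / 2)) *
            Real.exp (-(1 / 2 : ℝ) * (y ⬝ᵥ (S t)⁻¹.mulVec y)) * ((A t).mulVec y) i := by
      intro i; funext y
      simp only [Pi.smul_apply, smul_eq_mul]
      rw [hρ t y]
    rw [vdiv]
    have hterm : ∀ i : Fin d,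
        fderiv ℝ (fun y => (ρ t y • (A t).mulVec y) i) x (Pi.single i 1)
          = ρ t x * ((A t) i i - ((S t)⁻¹.mulVec x) i * ((A t).mulVec x) i) := by
      intro i
      rw [hfun i, gaussian_component_fderiv _ _ hsyminv, hρ t x]
    simp only [hterm]
    rw [← Finset.mul_sum, Finset.sum_sub_distrib, hK]
    congr 1
  rw [hpt, hvdiv]
  ring
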